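/- Let k ≥ 2 and let A ⊆ ℕ be k-sum-free. Suppose A contains an arithmetic progression x, x+m, ..., x+(i−1)m with all terms ≤ n, and let B = {a ∈ A : a + jm ∈ A for some j ∈ {1,...,i}}. Then the sets A, A+(k−1)x, (A∖B)+(k−1)x+m, ..., (A∖B)+(k−1)x+(i−1)m are pairwise disjoint, and consequently (i+1)|A_n| − (i−1)|B_n| ≤ n + (k−1)x + (i−1)m. -/

import Mathlib

def KSumFree (k : ℕ) (A : Set ℕ) : Prop :=
  ¬ ∃ a : Fin k → ℕ, (∀ i, a i ∈ A) ∧ (∑ i, a i) ∈ A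

theorem stmt_8 (k i : ℕ) (hk : 2 ≤ k) (hi : 1 ≤ i)
    (A : Set ℕ) (hpos : ∀ a ∈ A, 0 < a) (hA : KSumFree k A)
    (x m n : ℕ) (hm : 1 ≤ m)
    (hAP : ∀ j < i, x + j * m ∈ A ∧ x + j * m ≤ n) :
    ∀ B : Set ℕ, B = {a ∈ A | ∃ j, 1 ≤ j ∧ j ≤ i ∧ a + j * m ∈ A} →
    (∀ j₁ j₂, j₁ ≤ i → j₂ ≤ i → j₁ ≠ j₂ →
      Disjoint
        (if j₁ = 0 then A else if j₁ = 1 then (fun a => a + (k - 1) * x) '' A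
          else (fun a => a + (k - 1) * x + (j₁ - 1) * m) '' (A \ B))
        (if j₂ = 0 then A else if j₂ = 1 then (fun a => a + (k - 1) * x) '' A
          else (fun a => a + (k - 1) * x + (j₂ - 1) * m) '' (A \ B))) ∧
    (i + 1) * (A ∩ Set.Icc 1 n).ncard ≤
      (i - 1) * (B ∩ Set.Icc 1 n).ncard + n + (k - 1) * x + (i - 1) * m := by
  intro B hB
  obtain ⟨k', rfl⟩ : ∃ k', k = k' + 2 := ⟨k - 2, by omega⟩
  have hx : x ∈ A := by simpa using (hAP 0 (by omega)).1
  have key : ∀ a c, a ∈ A → c ∈ A → a + c + k' * x ∉ A := by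
    intro a c ha hc hmem
    exact hA ⟨Fin.cons a (Fin.cons c (fun _ => x)),
      fun t => Fin.cases ha (fun t => Fin.cases hc (fun _ => hx) t) t,
      by simpa [Fin.sum_cons, Finset.sum_const, mul_comm, ← add_assoc] using hmem⟩
  have key2 : ∀ a ∈ A, ∀ t < i, a + (k' + 1) * x + t * m ∉ A := by
    intro a ha t ht hmem
    refine key a (x + t * m) ha (hAP t ht).1 ?_
    rw [show a + (x + t * m) + k' * x = a + (k' + 1) * x + t * m by ring]
    exact hmem
  have hBmem : ∀ b ∈ A, ∀ j, 1 ≤ j → j ≤ i → b + j * m ∈ A → b ∈ B := by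
    intro b hb j h1 h2 h3
    rw [hB]; exact ⟨hb, j, h1, h2, h3⟩
  have main : ∀ j₁ j₂, j₁ ≤ i → j₂ ≤ i → j₁ < j₂ →
      Disjoint
        (if j₁ = 0 then A else if j₁ = 1 then (fun a => a + (k' + 2 - 1) * x) '' A
          else (fun a => a + (k' + 2 - 1) * x + (j₁ - 1) * m) '' (A \ B))
        (if j₂ = 0 then A else if j₂ = 1 then (fun a => a + (k' + 2 - 1) * x) '' A
          else (fun a => a + (k' + 2 - 1) * x + (j₂ - 1) * m) '' (A \ B)) := by
    intro j₁ j₂ h1 h2 hlt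
    simp only [show k' + 2 - 1 = k' + 1 from rfl]
    rw [Set.disjoint_left]
    intro y hy1 hy2
    by_cases e1 : j₁ = 0
    · rw [if_pos e1] at hy1
      by_cases e2 : j₂ = 1
      · rw [if_neg (by omega), if_pos e2] at hy2
        obtain ⟨a, ha, rfl⟩ := hy2
        exact key2 a ha 0 (by omega) (by simpa using hy1)
      · rw [if_neg (by omega), if_neg e2] at hy2
        obtain ⟨a, ha, rfl⟩ := hy2
        exact key2 a ha.1 (j₂ - 1) (by omega) hy1
    · by_cases e1' : j₁ = 1
      · rw [if_neg e1, if_pos e1'] at hy1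
        rw [if_neg (by omega), if_neg (by omega)] at hy2
        obtain ⟨a, ha, rfl⟩ := hy1
        obtain ⟨b, hb, heq⟩ := hy2
        simp only at heq
        have hab : a = b + (j₂ - 1) * m := by omega
        exact hb.2 (hBmem b hb.1 (j₂ - 1) (by omega) (by omega) (by rw [← hab]; exact ha))
      · rw [if_neg e1, if_neg e1'] at hy1
        rw [if_neg (by omega), if_neg (by omega)] at hy2
        obtain ⟨a, ha, rfl⟩ := hy1
        obtain ⟨b, hb, heq⟩ := hy2
        simp only at heq
        have hsplit : (j₂ - 1) * m = (j₁ - 1) * m + (j₂ - j₁) * m := by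
          rw [← Nat.add_mul]; congr 1; omega
        rw [hsplit] at heq
        have hab : a = b + (j₂ - j₁) * m := by omega
        exact hb.2 (hBmem b hb.1 (j₂ - j₁) (by omega) (by omega) (by rw [← hab]; exact ha.1))
  constructor
  · intro j₁ j₂ h1 h2 hne
    rcases lt_or_gt_of_ne hne with h | h
    · exact main _ _ h1 h2 h
    · exact (main _ _ h2 h1 h).symm
  -- counting
  classical
  obtain ⟨i', rfl⟩ : ∃ i', i = i' + 1 := ⟨i - 1, by omega⟩
  set N := n + (k' + 1) * x + i' * m with hN
  set F0 : Finset ℕ := (Finset.Icc 1 n).filter (· ∈ A) with hF0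
  set FB : Finset ℕ := (Finset.Icc 1 n).filter (· ∈ B) with hFB
  have hBsubA : B ⊆ A := by rw [hB]; exact fun a ha => ha.1
  have hFBsub : FB ⊆ F0 := by
    intro a ha
    simp only [hF0, hFB, Finset.mem_filter] at *
    exact ⟨ha.1, hBsubA ha.2⟩
  set G : ℕ → Finset ℕ := fun j =>
    if j = 0 then F0 else if j = 1 then F0.image (fun a => a + (k' + 1) * x)
    else (F0 \ FB).image (fun a => a + (k' + 1) * x + (j - 1) * m) with hG
  have hGeq0 : G 0 = F0 := by simp [hG]
  have hGeq1 : G 1 = F0.image (fun a => a + (k' + 1) * x) := by simp [hG]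
  have hGeqj : ∀ j, 2 ≤ j →
      G j = (F0 \ FB).image (fun a => a + (k' + 1) * x + (j - 1) * m) := by
    intro j hj
    simp [hG, show j ≠ 0 from by omega, show j ≠ 1 from by omega]
  have hF0A : (F0 : Set ℕ) ⊆ A := by
    intro a ha; simp only [hF0, Finset.coe_filter, Set.mem_setOf_eq] at ha; exact ha.2
  have hFDB : ((F0 \ FB : Finset ℕ) : Set ℕ) ⊆ A \ B := by
    intro a ha
    simp only [Finset.coe_sdiff, Set.mem_diff, hF0, hFB, Finset.coe_filter,
      Set.mem_setOf_eq] at ha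
    exact ⟨ha.1.2, fun hB' => ha.2 ⟨ha.1.1, hB'⟩⟩
  have hGsubS : ∀ j, (G j : Set ℕ) ⊆
      (if j = 0 then A else if j = 1 then (fun a => a + (k' + 1) * x) '' A
        else (fun a => a + (k' + 1) * x + (j - 1) * m) '' (A \ B)) := by
    intro j
    by_cases e0 : j = 0
    · subst e0
      rw [hGeq0, if_pos rfl]
      exact hF0A
    · by_cases e1 : j = 1
      · subst e1
        rw [hGeq1, if_neg one_ne_zero, if_pos rfl, Finset.coe_image]
        exact Set.image_mono hF0A
      · rw [hGeqj j (by omega), if_neg e0, if_neg e1, Finset.coe_image]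
        exact Set.image_mono hFDB
  have hGdisj : ∀ j₁ ∈ Finset.range (i' + 1 + 1), ∀ j₂ ∈ Finset.range (i' + 1 + 1),
      j₁ ≠ j₂ → Disjoint (G j₁) (G j₂) := by
    intro j₁ hj₁ j₂ hj₂ hne
    rw [Finset.mem_range] at hj₁ hj₂
    rw [← Finset.disjoint_coe]
    have hd : ∀ a b, a ≤ i' + 1 → b ≤ i' + 1 → a < b →
        Disjoint ((G a : Set ℕ)) ((G b : Set ℕ)) := by
      intro a b ha hb hab
      exact Set.disjoint_of_subset (hGsubS a) (hGsubS b)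
        (by simpa only [show k' + 2 - 1 = k' + 1 from rfl] using main a b ha hb hab)
    rcases lt_or_gt_of_ne hne with h | h
    · exact hd _ _ (by omega) (by omega) h
    · exact (hd _ _ (by omega) (by omega) h).symm
  have hGsubIcc : ∀ j ∈ Finset.range (i' + 1 + 1), G j ⊆ Finset.Icc 1 N := by
    intro j hj
    rw [Finset.mem_range] at hj
    intro a ha
    by_cases e0 : j = 0
    · subst e0
      rw [hGeq0] at ha
      simp only [hF0, Finset.mem_filter, Finset.mem_Icc] at ha
      rw [Finset.mem_Icc]; omega
    · by_cases e1 : j = 1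
      · subst e1
        rw [hGeq1] at ha
        simp only [Finset.mem_image, hF0, Finset.mem_filter, Finset.mem_Icc] at ha
        obtain ⟨b, ⟨⟨hb1, hb2⟩, _⟩, rfl⟩ := ha
        rw [Finset.mem_Icc]; omega
      · rw [hGeqj j (by omega)] at ha
        simp only [Finset.mem_image, Finset.mem_sdiff, hF0, Finset.mem_filter,
          Finset.mem_Icc] at ha
        obtain ⟨b, ⟨⟨⟨hb1, hb2⟩, _⟩, _⟩, rfl⟩ := ha
        have hjm : (j - 1) * m ≤ i' * m := Nat.mul_le_mul_right m (by omega)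
        rw [Finset.mem_Icc]; omega
  have hsum : ∑ j ∈ Finset.range (i' + 1 + 1), (G j).card ≤ N := by
    rw [← Finset.card_biUnion hGdisj]
    calc ((Finset.range (i' + 1 + 1)).biUnion G).card
        ≤ (Finset.Icc 1 N).card := by
          apply Finset.card_le_card
          intro a ha
          rw [Finset.mem_biUnion] at ha
          obtain ⟨j, hj, ha⟩ := ha
          exact hGsubIcc j hj ha
      _ = N := by rw [Nat.card_Icc]; omega
  have hinj : ∀ c : ℕ, Function.Injective (fun a : ℕ => a + c) :=
    fun c a b h => by exact Nat.add_right_cancel h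
  have hG0 : (G 0).card = F0.card := by rw [hGeq0]
  have hG1 : (G 1).card = F0.card := by
    rw [hGeq1, Finset.card_image_of_injective _ (hinj _)]
  have hGj : ∀ j, 2 ≤ j → (G j).card = F0.card - FB.card := by
    intro j hj
    rw [hGeqj j hj,
      Finset.card_image_of_injective _
        (fun a b h => Nat.add_right_cancel (Nat.add_right_cancel h)),
      Finset.card_sdiff_of_subset hFBsub]
  have hsumeq : ∑ j ∈ Finset.range (i' + 1 + 1), (G j).card
      = F0.card + F0.card + i' * (F0.card - FB.card) := by
    rw [Finset.sum_range_succ', Finset.sum_range_succ']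
    have : ∀ j ∈ Finset.range i', (G (j + 1 + 1)).card = F0.card - FB.card :=
      fun j _ => hGj _ (by omega)
    rw [Finset.sum_congr rfl this, Finset.sum_const, smul_eq_mul, hG0, hG1,
      Finset.card_range]
    ring
  have hncardA : (A ∩ Set.Icc 1 n).ncard = F0.card := by
    rw [show A ∩ Set.Icc 1 n = (F0 : Set ℕ) by
      ext a
      simp only [hF0, Finset.coe_filter, Set.mem_setOf_eq, Set.mem_inter_iff,
        Set.mem_Icc, Finset.mem_Icc]
      tauto]
    exact Set.ncard_coe_finset _
  have hncardB : (B ∩ Set.Icc 1 n).ncard = FB.card := by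
    rw [show B ∩ Set.Icc 1 n = (FB : Set ℕ) by
      ext a
      simp only [hFB, Finset.coe_filter, Set.mem_setOf_eq, Set.mem_inter_iff,
        Set.mem_Icc, Finset.mem_Icc]
      tauto]
    exact Set.ncard_coe_finset _
  rw [hncardA, hncardB]
  rw [hsumeq, hN] at hsum
  have hq : FB.card ≤ F0.card := Finset.card_le_card hFBsub
  have e1 : i' * F0.card = i' * (F0.card - FB.card) + i' * FB.card := by
    rw [← Nat.mul_add, Nat.sub_add_cancel hq]
  simp only [show i' + 1 - 1 = i' from rfl, show k' + 2 - 1 = k' + 1 from rfl]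
  nlinarith [hsum, e1]
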